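/- A promises profile (r,s) ∈ P² is stable if and only if for every coalition C ⊆ I with |C| ≥ ĸ̂ one has ∑_{i∈C} (u_i + r_i) ≥ ∑_{i∈C} s_i. -/

import Mathlib

open Finset

/-- The committee enacts the reform: at least `κ` members vote for it,
where member `i` votes for the reform iff `u i + r i ≥ s i`. -/
def Enacts {I : ℕ} (κ : ℕ) (u r s : Fin I → ℝ) : Prop :=
  κ ≤ (Finset.univ.filter (fun i => s i ≤ u i + r i)).card

/-- Coalition `C` blocks the promises profile `(r, s)`. -/
def Blocks {I : ℕ} (κ : ℕ) (u r s : Fin I → ℝ) (C : Finset (Fin I)) : Prop :=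
  (Enacts κ u r s ∧ ∃ s' : Fin I → ℝ, (∑ i, s' i = 0) ∧ (∀ i, s' i ≠ s i ↔ i ∈ C) ∧
      ¬ Enacts κ u r s' ∧ ∀ i ∈ C, u i + r i < s' i) ∨
  (¬ Enacts κ u r s ∧ ∃ r' : Fin I → ℝ, (∑ i, r' i = 0) ∧ (∀ i, r' i ≠ r i ↔ i ∈ C) ∧
      Enacts κ u r' s ∧ ∀ i ∈ C, s i < u i + r' i)

/-- The profile `(r, s)` is stable: no blocking coalition exists. -/
def StableProfile {I : ℕ} (κ : ℕ) (u r s : Fin I → ℝ) : Prop :=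
  ∀ C : Finset (Fin I), ¬ Blocks κ u r s C

lemma exists_delta {I : ℕ} (C : Finset (Fin I)) (hC : 2 ≤ C.card)
    (T : ℝ) (hT : 0 < T) (t : Fin I → ℝ) :
    ∃ δ : Fin I → ℝ, (∀ i ∈ C, 0 < δ i ∧ δ i ≠ t i) ∧ ∑ i ∈ C, δ i = T := by
  obtain ⟨a, ha⟩ := Finset.card_pos.mp (by omega : 0 < C.card)
  set m : ℕ := C.card - 1 with hm
  have hmpos : (0:ℝ) < m := by
    have : 1 ≤ m := by omega
    exact_mod_cast Nat.lt_of_lt_of_le Nat.zero_lt_one this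
  have hTm : 0 < T / m := div_pos hT hmpos
  have hfin : (((C.image t : Finset ℝ) : Set ℝ) ∪ {(T - t a) / m}).Finite :=
    (Finset.finite_toSet _).union (Set.finite_singleton _)
  obtain ⟨ε, hεIoo, hεS⟩ : ∃ x, x ∈ Set.Ioo 0 (T / m) ∧
      x ∉ (((C.image t : Finset ℝ) : Set ℝ) ∪ {(T - t a) / m}) := by
    obtain ⟨x, hx⟩ := ((Set.Ioo_infinite hTm).diff hfin).nonempty
    exact ⟨x, hx.1, hx.2⟩
  have hε0 : 0 < ε := hεIoo.1
  have hεT : ε * m < T := by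
    calc ε * m < (T / m) * m := mul_lt_mul_of_pos_right hεIoo.2 hmpos
    _ = T := div_mul_cancel₀ T (ne_of_gt hmpos)
  have hεnt : ∀ i ∈ C, ε ≠ t i := by
    intro i hi h
    exact hεS (Or.inl (by simpa using ⟨i, hi, h.symm⟩))
  have hεa : ε ≠ (T - t a) / m := fun h => hεS (Or.inr h)
  refine ⟨fun i => if i = a then T - m * ε else ε, ?_, ?_⟩
  · intro i hi
    by_cases hia : i = a
    · subst hia
      simp only [if_pos rfl, if_true]
      refine ⟨by nlinarith, fun h => hεa ?_⟩
      rw [← h]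
      field_simp
      ring
    · simp only [if_neg hia]
      exact ⟨hε0, hεnt i hi⟩
  · rw [← Finset.add_sum_erase C _ ha, if_pos rfl]
    have h2 : ∑ i ∈ C.erase a, (if i = a then T - m * ε else ε) = ∑ i ∈ C.erase a, ε :=
      Finset.sum_congr rfl fun i hi => if_neg (Finset.ne_of_mem_erase hi)
    rw [h2, Finset.sum_const, Finset.card_erase_of_mem ha, nsmul_eq_mul, ← hm]
    ring

/-- `(r,s) ∈ P²` is stable iff for every coalition `C` with `|C| ≥ ĸ̂ = I - κ + 1`,
`∑_{i∈C} (u_i + r_i) ≥ ∑_{i∈C} s_i`. -/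
theorem stable_characterization {I : ℕ} (κ : ℕ) (hκ : 1 ≤ κ) (hκI : κ ≤ I)
    (u : Fin I → ℝ) (hmono : Monotone u) (hu : 0 < ∑ i, u i)
    (r s : Fin I → ℝ) (hr : ∑ i, r i = 0) (hs : ∑ i, s i = 0) :
    StableProfile κ u r s ↔
      ∀ C : Finset (Fin I), I - κ + 1 ≤ C.card → ∑ i ∈ C, s i ≤ ∑ i ∈ C, (u i + r i) := by
  constructor
  · -- stable → condition
    intro hstab
    -- Step 1: the reform must be enacted
    have hEn : Enacts κ u r s := by
      by_contra hnEn
      by_cases hI2 : 2 ≤ I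
      · obtain ⟨δ, hδ, hδsum⟩ := exists_delta (univ : Finset (Fin I))
          (by simpa using hI2) (∑ i, u i) hu (fun i => u i + r i - s i)
        apply hstab univ
        right
        refine ⟨hnEn, fun i => s i - u i + δ i, ?_, ?_, ?_, ?_⟩
        · rw [Finset.sum_add_distrib, Finset.sum_sub_distrib, hs, hδsum]; ring
        · intro i
          simp only [Finset.mem_univ, iff_true]
          intro h
          exact (hδ i (mem_univ i)).2 (by linarith)
        · unfold Enacts
          have hfe : univ.filter (fun i => s i ≤ u i + (s i - u i + δ i)) = univ :=
            Finset.filter_true_of_mem (fun i _ => by linarith [(hδ i (mem_univ i)).1])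
          rw [hfe, Finset.card_univ, Fintype.card_fin]
          exact hκI
        · intro i _
          show s i < u i + (s i - u i + δ i)
          linarith [(hδ i (mem_univ i)).1]
      · -- I ≤ 1, hence I = 1 (since 1 ≤ κ ≤ I); direct contradiction
        have hI1 : I = 1 := by omega
        subst hI1
        apply hnEn
        unfold Enacts
        have h0 : r 0 = 0 := by simpa using hr
        have h1 : s 0 = 0 := by simpa using hs
        have h2 : 0 < u 0 := by simpa using hu
        have hfe : (univ : Finset (Fin 1)).filter (fun i => s i ≤ u i + r i) = univ := by
          apply Finset.filter_true_of_mem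
          intro i _
          have : i = 0 := Subsingleton.elim i 0
          subst this
          linarith
        rw [hfe, Finset.card_univ, Fintype.card_fin]
        exact hκI
    -- Step 2
    intro C hcard
    by_contra hlt'
    push_neg at hlt'
    have hT : 0 < ∑ i ∈ C, s i - ∑ i ∈ C, (u i + r i) := by linarith
    have hcardI : C.card ≤ I := by
      simpa using Finset.card_le_card (Finset.subset_univ C)
    by_cases hC2 : 2 ≤ C.card
    · obtain ⟨δ, hδ, hδsum⟩ := exists_delta C hC2 _ hT (fun i => s i - (u i + r i))
      set s' : Fin I → ℝ := fun i => if i ∈ C then u i + r i + δ i else s i with hs'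
      apply hstab C
      left
      have hsum_eq : ∑ i ∈ C, s' i = ∑ i ∈ C, s i := by
        have h1 : ∑ i ∈ C, s' i = ∑ i ∈ C, (u i + r i + δ i) :=
          Finset.sum_congr rfl (fun i hi => by simp only [hs', if_pos hi])
        rw [h1, Finset.sum_add_distrib, hδsum]
        ring
      refine ⟨hEn, s', ?_, ?_, ?_, ?_⟩
      · have key : ∑ i ∈ C, (s' i - s i) = ∑ i, (s' i - s i) :=
          Finset.sum_subset (Finset.subset_univ C)
            (fun i _ hi => by simp only [hs', if_neg hi, sub_self])
        rw [Finset.sum_sub_distrib, Finset.sum_sub_distrib, hsum_eq, hs] at key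
        linarith
      · intro i
        constructor
        · intro hne
          by_contra hiC
          exact hne (by simp only [hs', if_neg hiC])
        · intro hiC h
          simp only [hs', if_pos hiC] at h
          exact (hδ i hiC).2 (by linarith)
      · unfold Enacts
        rw [not_le]
        have hsub : univ.filter (fun i => s' i ≤ u i + r i) ⊆ univ \ C := by
          intro i hi
          rw [Finset.mem_filter] at hi
          rw [Finset.mem_sdiff]
          refine ⟨mem_univ i, fun hiC => ?_⟩
          have := (hδ i hiC).1
          simp only [hs', if_pos hiC] at hi
          linarith [hi.2]
        have hc := Finset.card_le_card hsub
        rw [Finset.card_sdiff_of_subset (Finset.subset_univ C), Finset.card_univ, Fintype.card_fin] at hc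
        omega
      · intro i hi
        show u i + r i < (if i ∈ C then u i + r i + δ i else s i)
        rw [if_pos hi]
        linarith [(hδ i hi).1]
    · -- C.card = 1, then κ = I and we contradict hEn
      have hc1 : C.card = 1 := by omega
      obtain ⟨i, rfl⟩ := Finset.card_eq_one.mp hc1
      have hκeq : κ = I := by omega
      have hfc : (univ.filter (fun i => s i ≤ u i + r i)).card ≤ I := by
        calc (univ.filter (fun i => s i ≤ u i + r i)).card ≤ (univ : Finset (Fin I)).card :=
              Finset.card_le_card (Finset.filter_subset _ _)
        _ = I := by rw [Finset.card_univ, Fintype.card_fin]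
      have hEn' : κ ≤ (univ.filter (fun i => s i ≤ u i + r i)).card := hEn
      have hfeq : univ.filter (fun i => s i ≤ u i + r i) = univ := by
        apply Finset.eq_univ_of_card
        rw [Fintype.card_fin]
        omega
      have : i ∈ univ.filter (fun i => s i ≤ u i + r i) := by rw [hfeq]; exact mem_univ i
      rw [Finset.mem_filter] at this
      simp only [Finset.sum_singleton] at hlt'
      linarith [this.2]
  · -- condition → stable
    intro hcond C hB
    have hEn : Enacts κ u r s := by
      by_contra hn
      unfold Enacts at hn
      rw [not_le] at hn
      have hsplit := Finset.card_filter_add_card_filter_not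
        (s := (univ : Finset (Fin I))) (fun i => s i ≤ u i + r i)
      rw [Finset.card_univ, Fintype.card_fin] at hsplit
      set F := univ.filter (fun i => ¬ (s i ≤ u i + r i)) with hF
      have hcardF : I - κ + 1 ≤ F.card := by omega
      have hne : F.Nonempty := Finset.card_pos.mp (by omega)
      have hstrict : ∑ i ∈ F, (u i + r i) < ∑ i ∈ F, s i := by
        apply Finset.sum_lt_sum_of_nonempty hne
        intro i hi
        rw [hF, Finset.mem_filter, not_le] at hi
        exact hi.2
      exact absurd (hcond F hcardF) (not_le.mpr hstrict)
    rcases hB with ⟨-, s', hs'0, hiff, hnEn, hlt⟩ | ⟨hnEn, -⟩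
    · unfold Enacts at hnEn
      rw [not_le] at hnEn
      have hsplit := Finset.card_filter_add_card_filter_not
        (s := (univ : Finset (Fin I))) (fun i => s' i ≤ u i + r i)
      rw [Finset.card_univ, Fintype.card_fin] at hsplit
      set D := univ.filter (fun i => ¬ (s' i ≤ u i + r i)) with hD
      have hcardD : I - κ + 1 ≤ D.card := by omega
      have hCD : C ⊆ D := by
        intro i hi
        rw [hD, Finset.mem_filter, not_le]
        exact ⟨mem_univ i, hlt i hi⟩
      have hDne : D.Nonempty := Finset.card_pos.mp (by omega)
      have h1 : ∑ i ∈ D, (u i + r i) < ∑ i ∈ D, s' i := by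
        apply Finset.sum_lt_sum_of_nonempty hDne
        intro i hi
        rw [hD, Finset.mem_filter, not_le] at hi
        exact hi.2
      have h2 : ∑ i ∈ D, s' i = ∑ i ∈ D, s i := by
        have hz : ∀ i, i ∉ C → s' i - s i = 0 := by
          intro i hiC
          have : s' i = s i := not_not.mp (fun hne => hiC ((hiff i).mp hne))
          rw [this, sub_self]
        have e1 : ∑ i ∈ C, (s' i - s i) = ∑ i ∈ D, (s' i - s i) :=
          Finset.sum_subset hCD (fun i _ hiC => hz i hiC)
        have e2 : ∑ i ∈ C, (s' i - s i) = ∑ i, (s' i - s i) :=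
          Finset.sum_subset (Finset.subset_univ C) (fun i _ hiC => hz i hiC)
        have e3 : ∑ i, (s' i - s i) = 0 := by
          rw [Finset.sum_sub_distrib, hs'0, hs, sub_zero]
        rw [e2, e3] at e1
        rw [Finset.sum_sub_distrib] at e1
        linarith
      have h3 := hcond D hcardD
      linarith
    · exact hnEn hEn
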